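/- arXiv:1309.1659 — 7 statements merged into one kernel-verified Lean document; each statement's English description precedes it below -/
import Mathlib

section
/- For every partial representation π : H → B of a Hopf algebra H on a unital algebra B, there is a unique algebra morphism π̂ : H_par → B such that π = π̂ ∘ [−]. Conversely, for every algebra morphism φ : H_par → B, the map h ↦ φ([h]) is a partial representation of H on B. -/
open TensorProduct BigOperators HopfAlgebra

variable (k : Type) [CommRing k] (H : Type) [Ring H] [HopfAlgebra k H]

/-- `sw f g : H → T(H)` is the Sweedler convolution `x ↦ ∑ f(x₍₁₎) * g(x₍₂₎)`. -/
noncomputable def sw (f g : H →ₗ[k] TensorAlgebra k H) : H →ₗ[k] TensorAlgebra k H :=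
  (LinearMap.mul' k (TensorAlgebra k H)) ∘ₗ (TensorProduct.map f g) ∘ₗ
    (Coalgebra.comul (R := k))

/-- The defining relations of the universal partial "Hopf" algebra `H_par`,
imposed on the tensor algebra `T(H)`. -/
inductive HparRel : TensorAlgebra k H → TensorAlgebra k H → Prop
  | one : HparRel (TensorAlgebra.ι k (1 : H)) 1
  | pr2 (h x : H) : HparRel
      (TensorAlgebra.ι k h *
        sw k H (TensorAlgebra.ι k) ((TensorAlgebra.ι k) ∘ₗ antipode (R := k)) x)
      (sw k H ((TensorAlgebra.ι k) ∘ₗ LinearMap.mulLeft k h)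
        ((TensorAlgebra.ι k) ∘ₗ antipode (R := k)) x)
  | pr3 (h x : H) : HparRel
      (sw k H (TensorAlgebra.ι k) ((TensorAlgebra.ι k) ∘ₗ antipode (R := k)) h *
        TensorAlgebra.ι k x)
      (sw k H (TensorAlgebra.ι k)
        ((TensorAlgebra.ι k) ∘ₗ (LinearMap.mulRight k x) ∘ₗ antipode (R := k)) h)
  | pr4 (h x : H) : HparRel
      (TensorAlgebra.ι k h *
        sw k H ((TensorAlgebra.ι k) ∘ₗ antipode (R := k)) (TensorAlgebra.ι k) x)
      (sw k H ((TensorAlgebra.ι k) ∘ₗ (LinearMap.mulLeft k h) ∘ₗ antipode (R := k))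
        (TensorAlgebra.ι k) x)
  | pr5 (h x : H) : HparRel
      (sw k H ((TensorAlgebra.ι k) ∘ₗ antipode (R := k)) (TensorAlgebra.ι k) h *
        TensorAlgebra.ι k x)
      (sw k H ((TensorAlgebra.ι k) ∘ₗ antipode (R := k))
        ((TensorAlgebra.ι k) ∘ₗ LinearMap.mulRight k x) h)

/-- The universal partial "Hopf" algebra `H_par` of a Hopf algebra `H`. -/
abbrev Hpar : Type := RingQuot (HparRel k H)

/-- The canonical (universal) partial representation `h ↦ [h]` of `H` on `H_par`. -/
noncomputable def bracket : H →ₗ[k] Hpar k H :=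
  (RingQuot.mkAlgHom k (HparRel k H)).toLinearMap ∘ₗ TensorAlgebra.ι k

/-- A partial representation of a Hopf algebra `H` on an algebra `B` (axioms (PR1)-(PR5)),
stated using arbitrary finite Sweedler decompositions of the comultiplication. -/
def IsPartialRep {H : Type} [Ring H] [HopfAlgebra k H]
    {B : Type} [Ring B] [Algebra k B] (π : H →ₗ[k] B) : Prop :=
  π 1 = 1 ∧
  (∀ (h x : H) (n : ℕ) (x1 x2 : Fin n → H),
    Coalgebra.comul (R := k) x = ∑ i, x1 i ⊗ₜ[k] x2 i →
    π h * ∑ i, π (x1 i) * π (antipode (R := k) (x2 i)) =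
      ∑ i, π (h * x1 i) * π (antipode (R := k) (x2 i))) ∧
  (∀ (h x : H) (n : ℕ) (h1 h2 : Fin n → H),
    Coalgebra.comul (R := k) h = ∑ i, h1 i ⊗ₜ[k] h2 i →
    (∑ i, π (h1 i) * π (antipode (R := k) (h2 i))) * π x =
      ∑ i, π (h1 i) * π (antipode (R := k) (h2 i) * x)) ∧
  (∀ (h x : H) (n : ℕ) (x1 x2 : Fin n → H),
    Coalgebra.comul (R := k) x = ∑ i, x1 i ⊗ₜ[k] x2 i →
    π h * ∑ i, π (antipode (R := k) (x1 i)) * π (x2 i) =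
      ∑ i, π (h * antipode (R := k) (x1 i)) * π (x2 i)) ∧
  (∀ (h x : H) (n : ℕ) (h1 h2 : Fin n → H),
    Coalgebra.comul (R := k) h = ∑ i, h1 i ⊗ₜ[k] h2 i →
    (∑ i, π (antipode (R := k) (h1 i)) * π (h2 i)) * π x =
      ∑ i, π (antipode (R := k) (h1 i)) * π (h2 i * x))


section Aux

lemma tp_exists_fin {M N : Type} [AddCommMonoid M] [AddCommMonoid N]
    [Module k M] [Module k N] (z : M ⊗[k] N) :
    ∃ (n : ℕ) (a : Fin n → M) (b : Fin n → N), z = ∑ i, a i ⊗ₜ[k] b i := by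
  obtain ⟨S, hS⟩ := TensorProduct.exists_finset z
  refine ⟨S.card, fun i => (S.equivFin.symm i).1.1, fun i => (S.equivFin.symm i).1.2, ?_⟩
  rw [hS, ← Finset.sum_attach S (fun a => a.1 ⊗ₜ[k] a.2)]
  exact (Equiv.sum_comp S.equivFin.symm (fun a => a.1.1 ⊗ₜ[k] a.1.2)).symm

lemma sw_apply (f g : H →ₗ[k] TensorAlgebra k H) (x : H) {n : ℕ} {x1 x2 : Fin n → H}
    (hx : Coalgebra.comul (R := k) x = ∑ i, x1 i ⊗ₜ[k] x2 i) :
    sw k H f g x = ∑ i, f (x1 i) * g (x2 i) := by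
  simp [sw, hx, map_sum]

end Aux

/-- The universal property of `H_par`: every partial representation
`π : H → B` factors as `π = π̂ ∘ [-]` through a unique algebra morphism
`π̂ : H_par → B`; conversely, for every algebra morphism `φ : H_par → B` the map
`h ↦ φ([h])` is a partial representation of `H` on `B`. -/
theorem Hpar_universal_property {B : Type} [Ring B] [Algebra k B] :
    (∀ π : H →ₗ[k] B, IsPartialRep k π →
      ∃! πhat : Hpar k H →ₐ[k] B, ∀ h : H, πhat (bracket k H h) = π h) ∧
    (∀ φ : Hpar k H →ₐ[k] B, IsPartialRep k (φ.toLinearMap ∘ₗ bracket k H)) := by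
  constructor
  · intro π hπ
    obtain ⟨hπ1, hπ2, hπ3, hπ4, hπ5⟩ := hπ
    set ψ : TensorAlgebra k H →ₐ[k] B := TensorAlgebra.lift k π with hψ
    have hψι : ∀ h : H, ψ (TensorAlgebra.ι k h) = π h := fun h =>
      TensorAlgebra.lift_ι_apply π h
    have w : ∀ a b, HparRel k H a b → ψ a = ψ b := by
      intro a b hab
      induction hab with
      | one => simpa [hψι] using hπ1
      | pr2 h x =>
          obtain ⟨n, x1, x2, hx⟩ := tp_exists_fin k (Coalgebra.comul (R := k) x)
          rw [map_mul, sw_apply k H _ _ x hx, sw_apply k H _ _ x hx]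
          simp only [map_sum, map_mul, hψι, LinearMap.comp_apply, LinearMap.mulLeft_apply]
          exact hπ2 h x n x1 x2 hx
      | pr3 h x =>
          obtain ⟨n, h1, h2, hh⟩ := tp_exists_fin k (Coalgebra.comul (R := k) h)
          rw [map_mul, sw_apply k H _ _ h hh, sw_apply k H _ _ h hh]
          simp only [map_sum, map_mul, hψι, LinearMap.comp_apply, LinearMap.mulRight_apply]
          exact hπ3 h x n h1 h2 hh
      | pr4 h x =>
          obtain ⟨n, x1, x2, hx⟩ := tp_exists_fin k (Coalgebra.comul (R := k) x)
          rw [map_mul, sw_apply k H _ _ x hx, sw_apply k H _ _ x hx]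
          simp only [map_sum, map_mul, hψι, LinearMap.comp_apply, LinearMap.mulLeft_apply]
          exact hπ4 h x n x1 x2 hx
      | pr5 h x =>
          obtain ⟨n, h1, h2, hh⟩ := tp_exists_fin k (Coalgebra.comul (R := k) h)
          rw [map_mul, sw_apply k H _ _ h hh, sw_apply k H _ _ h hh]
          simp only [map_sum, map_mul, hψι, LinearMap.comp_apply, LinearMap.mulRight_apply]
          exact hπ5 h x n h1 h2 hh
    refine ⟨RingQuot.liftAlgHom k ⟨ψ, w⟩, ?_, ?_⟩
    · intro h
      rw [bracket]
      simp only [LinearMap.comp_apply, AlgHom.toLinearMap_apply]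
      rw [RingQuot.liftAlgHom_mkAlgHom_apply]
      exact hψι h
    · intro g hg
      apply RingQuot.ringQuot_ext'
      apply TensorAlgebra.hom_ext
      ext h
      simp only [LinearMap.comp_apply, AlgHom.toLinearMap_apply, AlgHom.comp_apply]
      rw [RingQuot.liftAlgHom_mkAlgHom_apply]
      rw [hψι h, ← hg h, bracket]
      simp [LinearMap.comp_apply]
  · intro φ
    set π : H →ₗ[k] B := φ.toLinearMap ∘ₗ bracket k H with hπdef
    set ψ : TensorAlgebra k H →ₐ[k] B := φ.comp (RingQuot.mkAlgHom k (HparRel k H)) with hψ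
    have hψι : ∀ h : H, ψ (TensorAlgebra.ι k h) = π h := by
      intro h; simp [hψ, hπdef, bracket]
    have hrel : ∀ a b, HparRel k H a b → ψ a = ψ b := by
      intro a b hab
      exact congrArg φ (RingQuot.mkAlgHom_rel k hab)
    refine ⟨?_, ?_, ?_, ?_, ?_⟩
    · have := hrel _ _ (HparRel.one (k := k) (H := H))
      rw [hψι 1] at this; simpa using this
    · intro h x n x1 x2 hx
      have := hrel _ _ (HparRel.pr2 (k := k) (H := H) h x)
      rw [map_mul, sw_apply k H _ _ x hx, sw_apply k H _ _ x hx] at this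
      simpa only [map_sum, map_mul, hψι, LinearMap.comp_apply,
        LinearMap.mulLeft_apply] using this
    · intro h x n h1 h2 hh
      have := hrel _ _ (HparRel.pr3 (k := k) (H := H) h x)
      rw [map_mul, sw_apply k H _ _ h hh, sw_apply k H _ _ h hh] at this
      simpa only [map_sum, map_mul, hψι, LinearMap.comp_apply,
        LinearMap.mulRight_apply] using this
    · intro h x n x1 x2 hx
      have := hrel _ _ (HparRel.pr4 (k := k) (H := H) h x)
      rw [map_mul, sw_apply k H _ _ x hx, sw_apply k H _ _ x hx] at this
      simpa only [map_sum, map_mul, hψι, LinearMap.comp_apply,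
        LinearMap.mulLeft_apply] using this
    · intro h x n h1 h2 hh
      have := hrel _ _ (HparRel.pr5 (k := k) (H := H) h x)
      rw [map_mul, sw_apply k H _ _ h hh, sw_apply k H _ _ h hh] at this
      simpa only [map_sum, map_mul, hψι, LinearMap.comp_apply,
        LinearMap.mulRight_apply] using this
end

section
/- Let G be a group and k a field. The structures of a partial kG-module on the one-dimensional vector space k are in one-to-one correspondence with pairs (H, λ), where H ≤ G is a subgroup and λ : H → k* is a group homomorphism (one-dimensional representation of H). -/
/-- A partial action of a group `G` on a `k`-vector space `M` by partially defined
`k`-linear isomorphisms (equivalently, a partial `kG`-module structure on `M`):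
subspaces `X g ⊆ M` and isomorphisms `θ g : X g⁻¹ ≃ X g` with `X 1 = M`, `θ 1 = id`,
`θ g (X g⁻¹ ∩ X h) = X g ∩ X (gh)` and `θ g ∘ θ h = θ (gh)` where defined. -/
structure PartialGModule (G : Type*) [Group G] (k : Type*) [Field k]
    (M : Type*) [AddCommGroup M] [Module k M] where
  X : G → Submodule k M
  θ : (g : G) → (X g⁻¹ ≃ₗ[k] X g)
  X_one : X 1 = ⊤
  θ_one : ∀ m : X (1 : G)⁻¹, ((θ 1 m : M)) = (m : M)
  θ_image : ∀ g h : G,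
    Submodule.map ((X g).subtype ∘ₗ (θ g : X g⁻¹ →ₗ[k] X g))
      (Submodule.comap (X g⁻¹).subtype (X h)) =
      X g ⊓ X (g * h)
  θ_comp : ∀ (g h : G) (m : X h⁻¹) (h₁ : ((θ h m : M)) ∈ X g⁻¹)
    (h₂ : (m : M) ∈ X (g * h)⁻¹),
    ((θ g ⟨(θ h m : M), h₁⟩ : M)) = ((θ (g * h) ⟨(m : M), h₂⟩ : M))

namespace PGMaux

variable {G : Type*} [Group G] {k : Type*} [Field k]

lemma sub_bot_or_top (p : Submodule k k) : p = ⊥ ∨ p = ⊤ :=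
  Ideal.eq_bot_or_top p

lemma bot_ne_top' : (⊥ : Submodule k k) ≠ ⊤ := by
  intro h
  have : (1 : k) ∈ (⊥ : Submodule k k) := h ▸ Submodule.mem_top
  simp [Submodule.mem_bot] at this

lemma top_of_mem_ne {p : Submodule k k} {x : k} (hx : x ∈ p) (hx0 : x ≠ 0) : p = ⊤ := by
  rcases sub_bot_or_top p with h | h
  · exact absurd (by simpa [Submodule.mem_bot, h] using hx) hx0
  · exact h

lemma mem_zero_of_not_top {p : Submodule k k} (hp : p ≠ ⊤) {x : k} (hx : x ∈ p) : x = 0 := by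
  by_contra h0
  exact hp (top_of_mem_ne hx h0)

/-- Extensionality for partial G-module structures. -/
lemma PartialGModule.ext' {M : Type*} [AddCommGroup M] [Module k M]
    {P Q : PartialGModule G k M} (hX : P.X = Q.X)
    (hθ : ∀ (g : G) (m : P.X g⁻¹),
      ((P.θ g m : M)) = ((Q.θ g ⟨(m : M), hX ▸ m.2⟩ : M))) : P = Q := by
  cases P with
  | mk X θ X_one θ_one θ_image θ_comp =>
  cases Q with
  | mk X' θ' X_one' θ_one' θ_image' θ_comp' =>
  dsimp at hX
  subst hX
  have : θ = θ' := by
    funext g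
    apply LinearEquiv.toLinearMap_injective
    apply LinearMap.ext
    intro m
    apply Subtype.ext
    simpa using hθ g m
  subst this
  rfl

section Forward

variable (P : PartialGModule G k k)

lemma X_inv_top {g : G} (hg : P.X g = ⊤) : P.X g⁻¹ = ⊤ := by
  -- θ g⁻¹ : X (g⁻¹)⁻¹ ≃ X g⁻¹ ; X (g⁻¹)⁻¹ = X g is nontrivial
  have h1 : (1 : k) ∈ P.X g⁻¹⁻¹ := by rw [inv_inv, hg]; exact Submodule.mem_top
  set m : P.X g⁻¹⁻¹ := ⟨1, h1⟩ with hm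
  have hm0 : m ≠ 0 := by
    intro h
    have : (1 : k) = 0 := congrArg Subtype.val h
    simp at this
  have : P.θ g⁻¹ m ≠ 0 := by
    intro h
    exact hm0 ((P.θ g⁻¹).map_eq_zero_iff.mp h)
  have hv : ((P.θ g⁻¹ m : k)) ≠ 0 := by
    intro h
    exact this (Subtype.ext h)
  exact top_of_mem_ne (P.θ g⁻¹ m).2 hv

/-- The subgroup associated to a partial module structure on `k`. -/
def Hof : Subgroup G where
  carrier := {g | P.X g = ⊤}
  one_mem' := P.X_one
  inv_mem' := by
    intro g hg
    exact X_inv_top P hg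
  mul_mem' := by
    intro a b ha hb
    have key := P.θ_image a b
    have hc : Submodule.comap (P.X a⁻¹).subtype (P.X b) = ⊤ := by
      rw [hb]; exact Submodule.comap_top _
    rw [hc, Submodule.map_top] at key
    have hr : LinearMap.range ((P.X a).subtype ∘ₗ (P.θ a : P.X a⁻¹ →ₗ[k] P.X a)) = P.X a := by
      rw [LinearMap.range_comp, LinearEquiv.range, Submodule.map_top, Submodule.range_subtype]
    rw [hr] at key
    have : P.X a ≤ P.X (a * b) := by
      rw [key]; exact inf_le_right
    have : (⊤ : Submodule k k) ≤ P.X (a * b) := ha ▸ this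
    exact top_le_iff.mp this

lemma one_mem_X_inv {g : G} (hg : g ∈ Hof P) : (1 : k) ∈ P.X g⁻¹ := by
  have : P.X g⁻¹ = ⊤ := X_inv_top P hg
  rw [this]; exact Submodule.mem_top

/-- The scalar of `θ g`. -/
noncomputable def cval (g : G) (hg : g ∈ Hof P) : k :=
  (P.θ g ⟨1, one_mem_X_inv P hg⟩ : k)

lemma theta_val (g : G) (m : P.X g⁻¹) (h1 : (1 : k) ∈ P.X g⁻¹) :
    ((P.θ g m : k)) = (m : k) * (P.θ g ⟨1, h1⟩ : k) := by
  have hm : m = (m : k) • (⟨1, h1⟩ : P.X g⁻¹) := by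
    apply Subtype.ext
    simp
  calc ((P.θ g m : k)) = ((P.θ g ((m : k) • ⟨1, h1⟩) : k)) := by rw [← hm]
    _ = (((m : k) • P.θ g ⟨1, h1⟩ : P.X g) : k) := by rw [map_smul]
    _ = (m : k) * (P.θ g ⟨1, h1⟩ : k) := by simp [Submodule.coe_smul]

lemma cval_ne_zero (g : G) (hg : g ∈ Hof P) : cval P g hg ≠ 0 := by
  intro h
  have : P.θ g ⟨1, one_mem_X_inv P hg⟩ = 0 := Subtype.ext h
  have h0 : (⟨1, one_mem_X_inv P hg⟩ : P.X g⁻¹) = 0 := (P.θ g).map_eq_zero_iff.mp this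
  have : (1 : k) = 0 := congrArg Subtype.val h0
  simp at this

lemma cval_one : cval P 1 (Hof P).one_mem = 1 := by
  unfold cval
  rw [P.θ_one]

lemma cval_mul (a b : G) (ha : a ∈ Hof P) (hb : b ∈ Hof P) :
    cval P (a * b) (mul_mem ha hb) = cval P a ha * cval P b hb := by
  have h₂ : (1 : k) ∈ P.X (a * b)⁻¹ := one_mem_X_inv P (mul_mem ha hb)
  have h₁ : ((P.θ b ⟨1, one_mem_X_inv P hb⟩ : k)) ∈ P.X a⁻¹ := by
    rw [X_inv_top P ha]; exact Submodule.mem_top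
  have key := P.θ_comp a b ⟨1, one_mem_X_inv P hb⟩ h₁ h₂
  have lhs : ((P.θ a ⟨(P.θ b ⟨1, one_mem_X_inv P hb⟩ : k), h₁⟩ : k))
      = cval P b hb * cval P a ha := by
    rw [theta_val P a _ (one_mem_X_inv P ha)]
    rfl
  rw [lhs] at key
  calc cval P (a * b) (mul_mem ha hb)
      = ((P.θ (a * b) ⟨(1 : k), h₂⟩ : k)) := rfl
    _ = cval P b hb * cval P a ha := key.symm
    _ = cval P a ha * cval P b hb := mul_comm _ _

/-- The one-dimensional representation associated to a partial module structure on `k`. -/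
noncomputable def lamOf : (Hof P) →* kˣ where
  toFun h := Units.mk0 (cval P h.1 h.2) (cval_ne_zero P h.1 h.2)
  map_one' := by
    apply Units.ext
    simpa using cval_one P
  map_mul' := by
    rintro ⟨a, ha⟩ ⟨b, hb⟩
    apply Units.ext
    simpa using cval_mul P a b ha hb

/-- Forward map. -/
noncomputable def Phi (P : PartialGModule G k k) : Σ H : Subgroup G, H →* kˣ :=
  ⟨Hof P, lamOf P⟩

end Forward

section Backward

variable (H : Subgroup G) (f : H →* kˣ)

open scoped Classical

/-- The subspaces. -/
noncomputable def Xs : G → Submodule k k := fun g => if g ∈ H then ⊤ else ⊥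

/-- The scalars. -/
noncomputable def mus : G → k := fun g => if h : g ∈ H then (f ⟨g, h⟩ : k) else 1

lemma mus_ne_zero (g : G) : mus H f g ≠ 0 := by
  unfold mus
  split
  · exact Units.ne_zero _
  · exact one_ne_zero

lemma Xs_of_mem {g : G} (hg : g ∈ H) : Xs (k := k) H g = ⊤ := if_pos hg

lemma Xs_of_not_mem {g : G} (hg : g ∉ H) : Xs (k := k) H g = ⊥ := if_neg hg

lemma Xs_inv (g : G) : Xs (k := k) H g⁻¹ = Xs H g := by
  unfold Xs
  by_cases hg : g ∈ H
  · rw [if_pos (inv_mem hg), if_pos hg]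
  · rw [if_neg (fun h => hg (by simpa using inv_mem h)), if_neg hg]

lemma mem_of_ne {g : G} {x : k} (hx : x ∈ Xs H g) (hx0 : x ≠ 0) : g ∈ H := by
  by_contra hg
  rw [Xs_of_not_mem H hg] at hx
  exact hx0 ((Submodule.mem_bot k).mp hx)

noncomputable def es (g : G) : k ≃ₗ[k] k :=
  LinearEquiv.smulOfNeZero k k (mus H f g) (mus_ne_zero H f g)

lemma es_map (g : G) : Submodule.map ((es H f g : k →ₗ[k] k)) (Xs H g⁻¹) = Xs H g := by
  rw [Xs_inv]
  rcases sub_bot_or_top (Xs (k := k) H g) with h | h <;> rw [h]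
  · exact Submodule.map_bot _
  · rw [Submodule.map_top, LinearEquiv.range]

noncomputable def thetas (g : G) : (Xs (k := k) H g⁻¹ ≃ₗ[k] Xs (k := k) H g) :=
  LinearEquiv.ofSubmodules (es H f g) _ _ (es_map H f g)

lemma thetas_val (g : G) (m : Xs (k := k) H g⁻¹) :
    ((thetas H f g m : k)) = mus H f g * (m : k) := by
  unfold thetas
  rw [LinearEquiv.ofSubmodules_apply]
  simp [es, smul_eq_mul]

lemma mus_one : mus H f 1 = 1 := by
  unfold mus
  rw [dif_pos H.one_mem]
  have : (⟨1, H.one_mem⟩ : H) = 1 := rfl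
  rw [this, map_one, Units.val_one]

lemma mus_mul {a b : G} (ha : a ∈ H) (hb : b ∈ H) :
    mus H f (a * b) = mus H f a * mus H f b := by
  unfold mus
  rw [dif_pos (mul_mem ha hb), dif_pos ha, dif_pos hb]
  have : (⟨a * b, mul_mem ha hb⟩ : H) = ⟨a, ha⟩ * ⟨b, hb⟩ := rfl
  rw [this, map_mul, Units.val_mul]

/-- Backward map. -/
noncomputable def Psi (s : Σ H : Subgroup G, H →* kˣ) : PartialGModule G k k where
  X := Xs s.1
  θ := thetas s.1 s.2
  X_one := Xs_of_mem s.1 s.1.one_mem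
  θ_one := by
    intro m
    rw [thetas_val, mus_one, one_mul]
  θ_image := by
    intro g h
    apply le_antisymm
    · rintro x hx
      rw [Submodule.mem_map] at hx
      obtain ⟨y, hy, rfl⟩ := hx
      rw [Submodule.mem_comap] at hy
      have hval : (((Xs s.1 g).subtype ∘ₗ (thetas s.1 s.2 g : Xs s.1 g⁻¹ →ₗ[k] Xs s.1 g)) y : k)
          = mus s.1 s.2 g * (y : k) := thetas_val s.1 s.2 g y
      rw [hval]
      by_cases hy0 : (y : k) = 0
      · rw [hy0, mul_zero]
        exact Submodule.zero_mem _
      · have hginv : g⁻¹ ∈ s.1 := mem_of_ne s.1 y.2 hy0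
        have hg : g ∈ s.1 := by simpa using inv_mem hginv
        have hh : h ∈ s.1 := mem_of_ne s.1 hy hy0
        constructor
        · rw [Xs_of_mem s.1 hg]; exact Submodule.mem_top
        · rw [Xs_of_mem s.1 (mul_mem hg hh)]; exact Submodule.mem_top
    · rintro x ⟨hx1, hx2⟩
      rw [Submodule.mem_map]
      by_cases hx0 : x = 0
      · refine ⟨0, Submodule.zero_mem _, ?_⟩
        rw [hx0]
        simp
      · have hg : g ∈ s.1 := mem_of_ne s.1 hx1 hx0
        have hgh : g * h ∈ s.1 := mem_of_ne s.1 hx2 hx0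
        have hh : h ∈ s.1 := by
          have : g⁻¹ * (g * h) ∈ s.1 := mul_mem (inv_mem hg) hgh
          simpa using this
        have hymem : x / mus s.1 s.2 g ∈ Xs s.1 g⁻¹ := by
          rw [Xs_of_mem s.1 (inv_mem hg)]; exact Submodule.mem_top
        refine ⟨⟨x / mus s.1 s.2 g, hymem⟩, ?_, ?_⟩
        · rw [Submodule.mem_comap]
          show x / mus s.1 s.2 g ∈ Xs s.1 h
          rw [Xs_of_mem s.1 hh]; exact Submodule.mem_top
        · show ((thetas s.1 s.2 g ⟨x / mus s.1 s.2 g, hymem⟩ : k)) = x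
          rw [thetas_val]
          show mus s.1 s.2 g * (x / mus s.1 s.2 g) = x
          rw [mul_comm]
          exact div_mul_cancel₀ x (mus_ne_zero s.1 s.2 g)
  θ_comp := by
    intro g h m h₁ h₂
    rw [thetas_val, thetas_val, thetas_val]
    by_cases hm0 : (m : k) = 0
    · rw [hm0]; ring
    · have hh : h⁻¹ ∈ s.1 := mem_of_ne s.1 m.2 hm0
      have hh' : h ∈ s.1 := by simpa using inv_mem hh
      have hth : mus s.1 s.2 h * (m : k) ≠ 0 :=
        mul_ne_zero (mus_ne_zero s.1 s.2 h) hm0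
      have hg : g⁻¹ ∈ s.1 := mem_of_ne s.1 (by rw [thetas_val] at h₁; exact h₁) hth
      have hg' : g ∈ s.1 := by simpa using inv_mem hg
      rw [← mul_assoc, ← mus_mul s.1 s.2 hg' hh']

end Backward

lemma sigma_ext {H₁ H₂ : Subgroup G} {f₁ : H₁ →* kˣ} {f₂ : H₂ →* kˣ}
    (hH : H₁ = H₂) (hf : ∀ (g : G) (h₁ : g ∈ H₁) (h₂ : g ∈ H₂), f₁ ⟨g, h₁⟩ = f₂ ⟨g, h₂⟩) :
    (⟨H₁, f₁⟩ : Σ H : Subgroup G, H →* kˣ) = ⟨H₂, f₂⟩ := by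
  subst hH
  have : f₁ = f₂ := by
    ext ⟨g, hg⟩
    exact congrArg Units.val (hf g hg hg)
  rw [this]

lemma left_inv (P : PartialGModule G k k) : Psi (Phi P) = P := by
  have hX : (Psi (Phi P)).X = P.X := by
    funext g
    show Xs (Hof P) g = P.X g
    rcases sub_bot_or_top (P.X g) with h | h
    · rw [Xs_of_not_mem (Hof P) (fun hm => bot_ne_top' (h.symm.trans hm)), h]
    · rw [Xs_of_mem (Hof P) h, h]
  apply PartialGModule.ext' hX
  intro g m
  show ((thetas (Hof P) (lamOf P) g m : k)) = _
  refine (thetas_val (Hof P) (lamOf P) g m).trans ?_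
  by_cases hg : g ∈ Hof P
  · have h1 : (1 : k) ∈ P.X g⁻¹ := one_mem_X_inv P hg
    rw [theta_val P g _ h1]
    show mus (Hof P) (lamOf P) g * (m : k) = (m : k) * cval P g hg
    unfold mus
    rw [dif_pos hg]
    show (cval P g hg) * (m : k) = (m : k) * cval P g hg
    ring
  · -- X g⁻¹ = ⊥, so m = 0
    have hXg : P.X g = ⊤ → False := hg
    have hbot : P.X g⁻¹ ≠ ⊤ := by
      intro htop
      exact hXg (by simpa using X_inv_top P (g := g⁻¹) htop)
    have hm0 : (m : k) = 0 := by
      apply mem_zero_of_not_top hbot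
      exact (SetLike.ext_iff.mp (congrFun hX g⁻¹) (m : k)).mp m.2
    have : (⟨(m : k), hX ▸ m.2⟩ : P.X g⁻¹) = 0 := Subtype.ext hm0
    rw [this, map_zero, hm0]
    simp

lemma right_inv (s : Σ H : Subgroup G, H →* kˣ) : Phi (Psi s) = s := by
  obtain ⟨H, f⟩ := s
  have hH : Hof (Psi ⟨H, f⟩) = H := by
    ext g
    show Xs (k := k) H g = ⊤ ↔ g ∈ H
    constructor
    · intro h
      by_contra hg
      exact bot_ne_top' ((Xs_of_not_mem H hg).symm.trans h)
    · exact Xs_of_mem H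
  apply sigma_ext hH
  intro g h₁ h₂
  apply Units.ext
  show cval (Psi ⟨H, f⟩) g h₁ = (f ⟨g, h₂⟩ : k)
  unfold cval
  rw [show ((Psi ⟨H, f⟩).θ g ⟨1, one_mem_X_inv _ h₁⟩ : k)
      = ((thetas H f g ⟨1, one_mem_X_inv _ h₁⟩ : k)) from rfl, thetas_val]
  unfold mus
  rw [dif_pos h₂, mul_one]

end PGMaux

/-- The partial `kG`-module structures on the one-dimensional space `k`
are in one-to-one correspondence with pairs `(H, λ)` of a subgroup `H ≤ G` together with
a one-dimensional representation `λ : H → kˣ`. -/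
theorem partialGModule_on_field_correspondence (G : Type*) [Group G] (k : Type*) [Field k] :
    Nonempty (PartialGModule G k k ≃ (Σ H : Subgroup G, H →* kˣ)) := by
  exact ⟨{ toFun := PGMaux.Phi, invFun := PGMaux.Psi,
           left_inv := PGMaux.left_inv, right_inv := PGMaux.right_inv }⟩
end

section
/- Let G be a finite group and k a field with char(k) ∤ |G|. There is a bijective correspondence between subgroups H of G and partial G-gradings of the base field k (i.e. partial actions of k^G on k): the partial action corresponding to H is given by λ(p_g) = (1/|H|)·δ_{gH,H}. -/
open scoped Classical

lemma sum_ite_card {G : Type*} [Group G] [Fintype G] {k : Type*} [Field k]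
    (H : Subgroup G) (c : k) :
    ∑ g : G, (if g ∈ H then c else 0) = (Nat.card H : k) * c := by
  rw [← Finset.sum_filter, Finset.sum_const, nsmul_eq_mul]
  congr 1
  simp [Nat.card_eq_fintype_card, Fintype.card_subtype]

lemma card_ne {G : Type*} [Group G] [Fintype G] {k : Type*} [Field k]
    (hchar : (Fintype.card G : k) ≠ 0) (H : Subgroup G) : (Nat.card H : k) ≠ 0 := by
  obtain ⟨c, hc⟩ := Subgroup.card_subgroup_dvd_card H
  rw [Nat.card_eq_fintype_card] at hc
  intro h
  apply hchar
  rw [hc]; push_cast [h]; ring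


/-- A partial `G`-grading of the base field `k`, i.e. a partial action of the dual group
algebra `k^G` on `k`, written in terms of the scalars `λ_g = p_g · 1`:
`∑ p_g · a = a`, `p_g·(ab) = ∑_l (p_{gl⁻¹}·a)(p_l·b)` and
`p_g·(p_t·a) = (p_{gt⁻¹}·1)(p_t·a) = (p_t·a)(p_{t⁻¹g}·1)`. -/
def IsPartialGradingOfField (G : Type*) [Group G] [Fintype G] (k : Type*) [Field k]
    (lam : G → k) : Prop :=
  (∑ g : G, lam g = 1) ∧
  (∀ g : G, lam g = ∑ l : G, lam (g * l⁻¹) * lam l) ∧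
  (∀ g t : G, lam g * lam t = lam (g * t⁻¹) * lam t) ∧
  (∀ g t : G, lam g * lam t = lam t * lam (t⁻¹ * g))

/-- For a finite group `G` and a field `k` with `char k ∤ |G|`, the partial
`G`-gradings of `k` are in bijective correspondence with the subgroups `H ≤ G`, the
grading attached to `H` being `λ_g = (1/|H|) δ_{gH,H}`. -/
theorem partial_grading_of_field_iff_subgroup (G : Type*) [Group G] [Fintype G]
    (k : Type*) [Field k] (hchar : (Fintype.card G : k) ≠ 0) :
    (∀ H : Subgroup G, IsPartialGradingOfField G k
      (fun g => if g ∈ H then ((Nat.card H : k))⁻¹ else 0)) ∧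
    (∀ lam : G → k, IsPartialGradingOfField G k lam →
      ∃! H : Subgroup G,
        lam = fun g => if g ∈ H then ((Nat.card H : k))⁻¹ else 0) := by
  constructor
  · intro H
    set c : k := ((Nat.card H : k))⁻¹ with hc
    have hne : (Nat.card H : k) ≠ 0 := card_ne hchar H
    have hcc : (Nat.card H : k) * c = 1 := mul_inv_cancel₀ hne
    refine ⟨?_, ?_, ?_, ?_⟩
    · simpa using (sum_ite_card H c).trans hcc
    · intro g
      by_cases hg : g ∈ H
      · have : ∀ l : G, (if g * l⁻¹ ∈ H then c else 0) * (if l ∈ H then c else 0)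
            = (if l ∈ H then c * c else 0) := by
          intro l
          by_cases hl : l ∈ H
          · have : g * l⁻¹ ∈ H := H.mul_mem hg (H.inv_mem hl)
            simp [hl, this]
          · simp [hl]
        simp only [this]
        rw [sum_ite_card H (c * c), ← mul_assoc, hcc, one_mul]
        simp [hg]
      · have : ∀ l : G, (if g * l⁻¹ ∈ H then c else 0) * (if l ∈ H then c else 0) = 0 := by
          intro l
          by_cases hl : l ∈ H
          · have : g * l⁻¹ ∉ H := fun hgl => hg (by simpa using H.mul_mem hgl hl)
            simp [this]
          · simp [hl]
        simp only [this]
        simp [hg]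
    · intro g t
      by_cases ht : t ∈ H
      · have : g * t⁻¹ ∈ H ↔ g ∈ H := by
          constructor
          · intro h; simpa using H.mul_mem h ht
          · intro h; exact H.mul_mem h (H.inv_mem ht)
        by_cases hg : g ∈ H <;> simp [ht, hg, this]
      · simp [ht]
    · intro g t
      by_cases ht : t ∈ H
      · have : t⁻¹ * g ∈ H ↔ g ∈ H := by
          constructor
          · intro h; simpa using H.mul_mem ht h
          · intro h; exact H.mul_mem (H.inv_mem ht) h
        by_cases hg : g ∈ H <;> simp [ht, hg, this, mul_comm]
      · simp [ht]
  · rintro lam ⟨h1, h2, h3, h4⟩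
    have key : ∀ g : G, lam g ≠ 0 → lam g = lam 1 := by
      intro g hg
      have := h3 g g
      rw [mul_inv_cancel] at this
      exact mul_right_cancel₀ hg this
    have hone : lam 1 ≠ 0 := by
      have hex : ∃ g : G, lam g ≠ 0 := by
        by_contra h
        push_neg at h
        simp [h] at h1
      obtain ⟨g, hg⟩ := hex
      rw [← key g hg]; exact hg
    set H0 : Subgroup G :=
      { carrier := {g | lam g ≠ 0}
        one_mem' := hone
        mul_mem' := by
          intro a b ha hb
          have := h3 (a * b) b
          rw [mul_inv_cancel_right] at this
          intro h
          rw [h, zero_mul] at this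
          exact ha (or_iff_not_imp_right.mp (mul_eq_zero.mp this.symm) hb)
        inv_mem' := by
          intro a ha
          have := h3 1 a
          rw [one_mul] at this
          intro h
          rw [h, zero_mul] at this
          exact hone (or_iff_not_imp_right.mp (mul_eq_zero.mp this) ha) } with hH0
    have hmem : ∀ g : G, g ∈ H0 ↔ lam g ≠ 0 := fun g => Iff.rfl
    have hsum : (Nat.card H0 : k) * lam 1 = 1 := by
      rw [← sum_ite_card H0 (lam 1), ← h1]
      apply Finset.sum_congr rfl
      intro g _
      by_cases hg : lam g ≠ 0
      · rw [if_pos ((hmem g).mpr hg), key g hg]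
      · push_neg at hg
        rw [if_neg (fun h => (hmem g).mp h hg), hg]
    rw [Nat.card_eq_fintype_card] at hsum
    have hcard0 : (Nat.card H0 : k) ≠ 0 := fun h => by
      rw [Nat.card_eq_fintype_card] at h; simp [h] at hsum
    have hlam1 : lam 1 = ((Nat.card H0 : k))⁻¹ := by
      rw [Nat.card_eq_fintype_card] at hcard0 ⊢
      field_simp
      linear_combination hsum
    have hfun : lam = fun g => if g ∈ H0 then ((Nat.card H0 : k))⁻¹ else 0 := by
      funext g
      by_cases hg : lam g ≠ 0
      · rw [if_pos ((hmem g).mpr hg), key g hg, hlam1]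
      · push_neg at hg
        rw [if_neg (fun h => (hmem g).mp h hg), hg]
    refine ⟨H0, hfun, ?_⟩
    intro H' hH'
    ext g
    rw [hmem g, hH']
    simp only [ne_eq, ite_eq_right_iff, not_forall]
    constructor
    · intro hg
      exact ⟨hg, inv_ne_zero (card_ne hchar H')⟩
    · rintro ⟨hg, -⟩
      exact hg
end

section
/- Let G be a finite group, H a normal subgroup of G, and A a G/H-graded algebra (i.e. a k^{G/H}-module algebra with action ▷). Then the formula p_g · a = (1/|H|) q_{gH} ▷ a defines a partial G-grading (partial k^G-action) on A, where q_{gH} denotes the canonical basis element of k^{G/H}. -/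
open scoped Classical

/-- Let `G` be a finite group, `H ⊴ G`, and let `A` be a `G/H`-graded
algebra, i.e. a `k^{G/H}`-module algebra with action `q_{gH} ▷ a = r (gH) a`.  Then
`p_g · a := (1/|H|) q_{gH} ▷ a` is a partial `G`-grading (partial `k^G`-action) on `A`. -/
theorem quotient_grading_gives_partial_grading
    (k : Type*) [Field k] (G : Type*) [Group G] [Fintype G]
    (hchar : (Fintype.card G : k) ≠ 0)
    (H : Subgroup G) [H.Normal]
    (A : Type*) [Ring A] [Algebra k A]
    (r : G ⧸ H → (A →ₗ[k] A))
    -- `A` is `G/H`-graded: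
    (hsum : ∀ a : A, ∑ x : G ⧸ H, r x a = a)
    (hmul : ∀ (x : G ⧸ H) (a b : A), r x (a * b) = ∑ y : G ⧸ H, r (x * y⁻¹) a * r y b)
    (hproj : ∀ (x y : G ⧸ H) (a : A), r x (r y a) = if x = y then r y a else 0) :
    -- `p_g · a := (1/|H|) • r gH a` is a partial `G`-grading of `A`:
    (∀ a : A, ∑ g : G, ((Nat.card H : k))⁻¹ • r (g : G ⧸ H) a = a) ∧
    (∀ (g : G) (a b : A),
      ((Nat.card H : k))⁻¹ • r (g : G ⧸ H) (a * b) =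
        ∑ l : G, (((Nat.card H : k))⁻¹ • r ((g * l⁻¹ : G) : G ⧸ H) a) *
          (((Nat.card H : k))⁻¹ • r (l : G ⧸ H) b)) ∧
    (∀ (g t : G) (a : A),
      ((Nat.card H : k))⁻¹ • r (g : G ⧸ H) (((Nat.card H : k))⁻¹ • r (t : G ⧸ H) a) =
        (((Nat.card H : k))⁻¹ • r ((g * t⁻¹ : G) : G ⧸ H) (1 : A)) *
          (((Nat.card H : k))⁻¹ • r (t : G ⧸ H) a)) ∧
    (∀ (g t : G) (a : A),
      ((Nat.card H : k))⁻¹ • r (g : G ⧸ H) (((Nat.card H : k))⁻¹ • r (t : G ⧸ H) a) =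
        (((Nat.card H : k))⁻¹ • r (t : G ⧸ H) a) *
          (((Nat.card H : k))⁻¹ • r ((t⁻¹ * g : G) : G ⧸ H) (1 : A))) := by
  set c : k := ((Nat.card H : k))⁻¹ with hc
  -- |H| ≠ 0 in k
  have hHne : (Nat.card H : k) ≠ 0 := by
    intro h0
    apply hchar
    have := Subgroup.card_eq_card_quotient_mul_card_subgroup H
    rw [Nat.card_eq_fintype_card] at this
    rw [this]
    push_cast
    rw [h0, mul_zero]
  have hcH : c * (Nat.card H : k) = 1 := inv_mul_cancel₀ hHne
  -- fibers of the quotient map have size |H|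
  have hfib : ∀ x : G ⧸ H,
      (Finset.univ.filter (fun g : G => (g : G ⧸ H) = x)).card = Nat.card H := by
    intro x
    induction x using QuotientGroup.induction_on with
    | H g0 =>
      rw [← Fintype.card_subtype]
      rw [Nat.card_eq_fintype_card]
      apply Fintype.card_congr
      refine
        { toFun := fun g => ⟨g0⁻¹ * g.1, QuotientGroup.eq.mp g.2.symm⟩
          invFun := fun h => ⟨g0 * h.1, ?_⟩
          left_inv := fun g => by simp
          right_inv := fun h => by simp }
      rw [eq_comm, QuotientGroup.eq]
      simpa using h.2
  -- key fiberwise summation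
  have key : ∀ f : G ⧸ H → A, ∑ g : G, f (g : G ⧸ H) = Nat.card H • ∑ x : G ⧸ H, f x := by
    intro f
    rw [← Finset.sum_fiberwise' Finset.univ (fun g : G => (g : G ⧸ H)) f]
    rw [Finset.smul_sum]
    refine Finset.sum_congr rfl fun x _ => ?_
    rw [Finset.sum_const, hfib]
  -- unit multiplication lemmas
  have hleft : ∀ (x y : G ⧸ H) (b : A), r x 1 * r y b = if x = 1 then r y b else 0 := by
    intro x y b
    have h1 := hmul (x * y) 1 (r y b)
    rw [one_mul, hproj] at h1
    rw [Finset.sum_eq_single y (fun u _ hu => by rw [hproj, if_neg hu, mul_zero])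
      (fun h => absurd (Finset.mem_univ y) h)] at h1
    rw [hproj, if_pos rfl, mul_inv_cancel_right] at h1
    rw [← h1, if_congr mul_eq_right rfl rfl]
  have hright : ∀ (x y : G ⧸ H) (a : A), r y a * r x 1 = if x = 1 then r y a else 0 := by
    intro x y a
    have h1 := hmul (y * x) (r y a) 1
    rw [mul_one, hproj] at h1
    rw [Finset.sum_eq_single x (fun u _ hu => by
        rw [hproj, if_neg (fun he => hu
          (mul_inv_eq_one.mp (mul_left_cancel (a := y)
            (by rw [← mul_assoc, he, mul_one]))).symm), zero_mul])
      (fun h => absurd (Finset.mem_univ x) h)] at h1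
    rw [mul_inv_cancel_right, hproj, if_pos rfl] at h1
    rw [← h1, if_congr mul_eq_left rfl rfl]
  refine ⟨?_, ?_, ?_, ?_⟩
  · intro a
    rw [← Finset.smul_sum, key (fun x => r x a), hsum, ← Nat.cast_smul_eq_nsmul k,
      smul_smul, hcH, one_smul]
  · intro g a b
    have : ∀ l : G, (c • r ((g * l⁻¹ : G) : G ⧸ H) a) * (c • r (l : G ⧸ H) b)
        = (c * c) • ((fun y : G ⧸ H => r ((g : G ⧸ H) * y⁻¹) a * r y b) (l : G ⧸ H)) := by
      intro l
      rw [smul_mul_smul_comm]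
      norm_cast
    rw [Finset.sum_congr rfl fun l _ => this l, ← Finset.smul_sum,
      key (fun y => r ((g : G ⧸ H) * y⁻¹) a * r y b), ← hmul, ← Nat.cast_smul_eq_nsmul k,
      smul_smul, mul_assoc, hcH, mul_one]
  · intro g t a
    rw [map_smul, smul_smul, smul_mul_smul_comm, hproj, hleft]
    congr 2
    have : ((g * t⁻¹ : G) : G ⧸ H) = (g : G ⧸ H) * (t : G ⧸ H)⁻¹ := by push_cast; rfl
    rw [this, mul_inv_eq_one]
  · intro g t a
    have h2 : (((t⁻¹ * g : G) : G ⧸ H) = 1) ↔ ((g : G ⧸ H) = (t : G ⧸ H)) := by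
      rw [show ((t⁻¹ * g : G) : G ⧸ H) = (t : G ⧸ H)⁻¹ * (g : G ⧸ H) by push_cast; rfl,
        inv_mul_eq_one, eq_comm]
    rw [map_smul, smul_smul, smul_mul_smul_comm, hproj, hright, if_congr h2 rfl rfl]
end

section
/- Let G be a finite group, k a field with char(k) ∤ |G|, and H a normal subgroup of G. The assignment q_{gH} ▷ a := |H|·(p_g · a) establishes a bijection between linear partial G-gradings of A with linear support H and G/H-gradings of A; its inverse sends a G/H-grading ▷ to p_g·a := (1/|H|) q_{gH} ▷ a. In particular, for any linear partial G-grading with linear support H one has p_g·a = (1/|H|) Σ_{t ∈ gH} p_t·a. -/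
open scoped Classical

variable (k : Type*) [Field k] (G : Type*) [Group G] [Fintype G]
variable (A : Type*) [Ring A] [Algebra k A]

/-- A partial `G`-grading of `A`: a partial action of `k^G` on `A`, written in terms of
the operators `p g = (p_g · -)`. -/
def IsPartialGGrading (p : G → (A →ₗ[k] A)) : Prop :=
  (∀ a : A, ∑ g : G, p g a = a) ∧
  (∀ (g : G) (a b : A), p g (a * b) = ∑ l : G, p (g * l⁻¹) a * p l b) ∧
  (∀ (g t : G) (a : A), p g (p t a) = p (g * t⁻¹) 1 * p t a) ∧
  (∀ (g t : G) (a : A), p g (p t a) = p t a * p (t⁻¹ * g) 1)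

/-- The partial grading `p` is linear with linear support `H`:
`p_g · 1 = (1/|H|) δ_{gH,H} 1`. -/
def HasLinearSupport (H : Subgroup G) (p : G → (A →ₗ[k] A)) : Prop :=
  ∀ g : G, p g 1 = (if g ∈ H then ((Nat.card H : k))⁻¹ else 0) • (1 : A)

/-- A (global) `G/H`-grading of `A`: a `k^{G/H}`-module algebra structure, written in
terms of the operators `q x = (q_x ▷ -)`. -/
def IsQuotientGrading (H : Subgroup G) [H.Normal] (q : G ⧸ H → (A →ₗ[k] A)) : Prop :=
  (∀ a : A, ∑ x : G ⧸ H, q x a = a) ∧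
  (∀ (x : G ⧸ H) (a b : A), q x (a * b) = ∑ y : G ⧸ H, q (x * y⁻¹) a * q y b) ∧
  (∀ (x y : G ⧸ H) (a : A), q x (q y a) = if x = y then q y a else 0)

section AuxTest
variable {H : Subgroup G}

lemma aux_card_ne_zero (hchar : (Fintype.card G : k) ≠ 0) (H : Subgroup G) :
    (Nat.card H : k) ≠ 0 := by
  intro h0
  obtain ⟨m, hm⟩ := Subgroup.card_subgroup_dvd_card H
  apply hchar
  rw [← Nat.card_eq_fintype_card, hm, Nat.cast_mul, h0, zero_mul]

lemma aux_mk_mul_mem (g : G) (h : H) : ((g * (h : G) : G) : G ⧸ H) = (g : G ⧸ H) :=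
  (QuotientGroup.eq.mpr (by simpa using h.2)).symm

noncomputable def cosetEquiv (H : Subgroup G) : (G ⧸ H) × H ≃ G where
  toFun z := Quotient.out z.1 * z.2
  invFun g := ((g : G ⧸ H), ⟨(Quotient.out ((g : G ⧸ H)))⁻¹ * g,
    QuotientGroup.eq.mp (Quotient.out_eq (g : G ⧸ H))⟩)
  left_inv := by
    rintro ⟨x, h⟩
    have hx : ((Quotient.out x * (h : G) : G) : G ⧸ H) = x := by
      rw [aux_mk_mul_mem G]; exact Quotient.out_eq x
    refine Prod.ext hx (Subtype.ext ?_)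
    show (Quotient.out (((Quotient.out x * (h : G) : G) : G ⧸ H)))⁻¹ *
      (Quotient.out x * (h : G)) = (h : G)
    rw [hx, inv_mul_cancel_left]
  right_inv := fun g => mul_inv_cancel_left _ g

lemma sum_coset_decomp {M : Type*} [AddCommMonoid M] (H : Subgroup G) (f : G → M) :
    ∑ g : G, f g = ∑ x : G ⧸ H, ∑ h : H, f (Quotient.out x * h) := by
  rw [← Equiv.sum_comp (cosetEquiv G H) f, Fintype.sum_prod_type]
  rfl

lemma sum_ite_mem_subgroup {M : Type*} [AddCommMonoid M] (H : Subgroup G) (f : G → M) :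
    ∑ s : G, (if s ∈ H then f s else 0) = ∑ h : H, f h := by
  rw [← Finset.sum_filter]
  exact Finset.sum_subtype _ (by simp) f

end AuxTest

section Aux2
variable {k G A}

lemma aux_inpart (H : Subgroup G) (p : G → (A →ₗ[k] A)) (hp : IsPartialGGrading k G A p)
    (hs : HasLinearSupport k G A H p) (g : G) (a : A) :
    p g a = ((Nat.card H : k))⁻¹ • ∑ h : H, p (g * (h : G)) a := by
  obtain ⟨h1, h2, h3, h4⟩ := hp
  conv_lhs => rw [← h1 a, map_sum]
  have key : ∀ t : G, p g (p t a) =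
      (if t⁻¹ * g ∈ H then ((Nat.card H : k))⁻¹ else 0) • p t a := by
    intro t
    rw [h4 g t a, hs (t⁻¹ * g), mul_smul_comm, mul_one]
  simp_rw [key]
  rw [← Equiv.sum_comp (Equiv.mulLeft g)
    (fun t => (if t⁻¹ * g ∈ H then ((Nat.card H : k))⁻¹ else 0) • p t a)]
  simp only [Equiv.coe_mulLeft]
  have he : ∀ s : G, ((g * s)⁻¹ * g ∈ H) = (s ∈ H) := by
    intro s
    have : (g * s)⁻¹ * g = s⁻¹ := by group
    rw [this, inv_mem_iff]
  simp_rw [he, ite_smul, zero_smul]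
  rw [sum_ite_mem_subgroup G H (fun s => ((Nat.card H : k))⁻¹ • p (g * s) a),
    ← Finset.smul_sum]

lemma aux_const (H : Subgroup G) (p : G → (A →ₗ[k] A)) (hp : IsPartialGGrading k G A p)
    (hs : HasLinearSupport k G A H p) (g g' : G) (hgg' : (g : G ⧸ H) = (g' : G ⧸ H)) :
    p g = p g' := by
  have hmem : g⁻¹ * g' ∈ H := QuotientGroup.eq.mp hgg'
  ext a
  rw [aux_inpart H p hp hs g a, aux_inpart H p hp hs g' a]
  congr 1
  rw [← Equiv.sum_comp (Equiv.mulLeft (⟨g⁻¹ * g', hmem⟩ : H))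
    (fun h : H => p (g * (h : G)) a)]
  refine Finset.sum_congr rfl fun h _ => ?_
  have : g * ((((⟨g⁻¹ * g', hmem⟩ : H) * h : H)) : G) = g' * (h : G) := by
    push_cast
    group
  simp only [Equiv.coe_mulLeft, this]

end Aux2

section Aux3
variable {k G A}

lemma aux_q_one (H : Subgroup G) [H.Normal] (q : G ⧸ H → (A →ₗ[k] A))
    (hq : IsQuotientGrading k G A H q) (x : G ⧸ H) :
    q x 1 = if x = 1 then (1 : A) else 0 := by
  obtain ⟨h1, h2, h3⟩ := hq
  have step : ∀ x y : G ⧸ H, q x (q y 1) = q y 1 * q (y⁻¹ * x) 1 := by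
    intro x y
    calc q x (q y 1) = q x (q y 1 * 1) := by rw [mul_one]
      _ = ∑ z, q (x * z⁻¹) (q y 1) * q z 1 := h2 x _ 1
      _ = ∑ z, (if z = y⁻¹ * x then q y 1 * q z 1 else 0) := by
          refine Finset.sum_congr rfl fun z _ => ?_
          rw [h3, ite_mul, zero_mul]
          refine if_congr ⟨fun h => by rw [← h]; group, fun h => by rw [h]; group⟩ rfl rfl
      _ = q y 1 * q (y⁻¹ * x) 1 := by
          rw [Finset.sum_ite_eq' Finset.univ, if_pos (Finset.mem_univ _)]
  have hprod : ∀ y z : G ⧸ H, q y 1 * q z 1 = if z = 1 then q y 1 else 0 := by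
    intro y z
    have h := step (y * z) y
    rw [h3, inv_mul_cancel_left] at h
    rw [← h]
    exact if_congr mul_eq_left rfl rfl
  calc q x 1 = 1 * q x 1 := (one_mul _).symm
    _ = (∑ y, q y 1) * q x 1 := by rw [h1 1]
    _ = ∑ y, q y 1 * q x 1 := Finset.sum_mul _ _ _
    _ = ∑ y : G ⧸ H, (if x = 1 then q y 1 else 0) := by simp_rw [hprod]
    _ = if x = 1 then (1 : A) else 0 := by
        split
        · exact h1 1
        · simp

end Aux3

section Aux4
variable {H : Subgroup G}

lemma aux_out_mk (H : Subgroup G) (x : G ⧸ H) : ((Quotient.out x : G) : G ⧸ H) = x :=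
  Quotient.out_eq x

lemma aux_mk_coe [H.Normal] (h : H) : (((h : G)) : G ⧸ H) = 1 :=
  (QuotientGroup.eq_one_iff _).mpr h.2

end Aux4

/-- For `char k ∤ |G|` and `H ⊴ G`, the assignment
`q_{gH} ▷ a := |H| (p_g · a)` is a bijection between linear partial `G`-gradings of `A`
with linear support `H` and `G/H`-gradings of `A`, with inverse
`p_g · a := (1/|H|) q_{gH} ▷ a`; in particular `p_g · a = (1/|H|) ∑_{t ∈ gH} p_t · a`. -/
theorem linear_partial_grading_iff_quotient_grading
    (hchar : (Fintype.card G : k) ≠ 0) (H : Subgroup G) [H.Normal] :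
    -- `down` sends `G/H`-gradings to linear partial `G`-gradings with support `H`
    (∀ q : G ⧸ H → (A →ₗ[k] A), IsQuotientGrading k G A H q →
      IsPartialGGrading k G A (fun g => ((Nat.card H : k))⁻¹ • q (g : G ⧸ H)) ∧
      HasLinearSupport k G A H (fun g => ((Nat.card H : k))⁻¹ • q (g : G ⧸ H)) ∧
      -- `up ∘ down = id`
      (fun x : G ⧸ H => (Nat.card H : k) •
        (((Nat.card H : k))⁻¹ • q ((Quotient.out x : G) : G ⧸ H))) = q) ∧
    -- `up` sends linear partial `G`-gradings with support `H` to `G/H`-gradings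
    (∀ p : G → (A →ₗ[k] A), IsPartialGGrading k G A p → HasLinearSupport k G A H p →
      IsQuotientGrading k G A H (fun x => (Nat.card H : k) • p (Quotient.out x)) ∧
      -- `down ∘ up = id`
      (fun g : G => ((Nat.card H : k))⁻¹ •
        ((Nat.card H : k) • p (Quotient.out ((g : G ⧸ H))))) = p) ∧
    -- in particular `p_g · a = (1/|H|) ∑_{t ∈ gH} p_t · a`
    (∀ p : G → (A →ₗ[k] A), IsPartialGGrading k G A p → HasLinearSupport k G A H p →
      ∀ (g : G) (a : A),
        p g a = ((Nat.card H : k))⁻¹ • ∑ h : H, p (g * (h : G)) a) := by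
  have hc : (Nat.card H : k) ≠ 0 := aux_card_ne_zero k G hchar H
  refine ⟨?_, ?_, fun p hp hs g a => aux_inpart H p hp hs g a⟩
  · -- down
    intro q hq
    have hqe : ∀ x : G ⧸ H, q x 1 = if x = 1 then (1 : A) else 0 := aux_q_one H q hq
    obtain ⟨h1, h2, h3⟩ := hq
    refine ⟨⟨?_, ?_, ?_, ?_⟩, ?_, ?_⟩
    · -- partial axiom 1
      intro a
      simp only [LinearMap.smul_apply]
      rw [← Finset.smul_sum, sum_coset_decomp G H (fun g => q (g : G ⧸ H) a)]
      simp_rw [aux_mk_mul_mem G, aux_out_mk G H, Finset.sum_const, Finset.card_univ,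
        ← Nat.card_eq_fintype_card]
      rw [← Finset.smul_sum, h1 a, ← Nat.cast_smul_eq_nsmul k, inv_smul_smul₀ hc]
    · -- partial axiom 2
      intro g a b
      simp only [LinearMap.smul_apply]
      rw [h2]
      simp_rw [smul_mul_assoc, mul_smul_comm, ← Finset.smul_sum]
      congr 1
      rw [sum_coset_decomp G H
        (fun l => q ((g * l⁻¹ : G) : G ⧸ H) a * q ((l : G) : G ⧸ H) b)]
      simp only [QuotientGroup.mk_mul, QuotientGroup.mk_inv, aux_mk_coe, mul_one,
        aux_out_mk G H]
      simp_rw [Finset.sum_const, Finset.card_univ, ← Nat.card_eq_fintype_card,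
        ← Nat.cast_smul_eq_nsmul k]
      rw [← Finset.smul_sum, inv_smul_smul₀ hc]
    · -- partial axiom 3
      intro g t a
      simp only [LinearMap.smul_apply, map_smul, h3, hqe, QuotientGroup.mk_mul,
        QuotientGroup.mk_inv, mul_inv_eq_one, smul_ite, smul_zero, ite_mul, zero_mul,
        smul_mul_assoc, one_mul, mul_smul_comm]
    · -- partial axiom 4
      intro g t a
      simp only [LinearMap.smul_apply, map_smul, h3, hqe, QuotientGroup.mk_mul,
        QuotientGroup.mk_inv, inv_mul_eq_one, smul_ite, smul_zero, mul_ite, mul_zero,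
        mul_one, smul_mul_assoc, mul_smul_comm, one_mul, ite_mul, zero_mul]
      exact if_congr eq_comm rfl rfl
    · -- linear support
      intro g
      simp only [LinearMap.smul_apply, hqe, QuotientGroup.eq_one_iff, smul_ite,
        smul_zero, ite_smul, zero_smul, smul_eq_mul]
    · -- up ∘ down = id
      funext x
      show (Nat.card H : k) • (((Nat.card H : k))⁻¹ •
        q ((Quotient.out x : G) : G ⧸ H)) = q x
      rw [smul_inv_smul₀ hc, aux_out_mk G H]
  · -- up
    intro p hp hs
    have hconst := aux_const H p hp hs
    obtain ⟨h1, h2, h3, h4⟩ := hp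
    constructor
    · refine ⟨?_, ?_, ?_⟩
      · -- quotient axiom 1
        intro a
        simp only [LinearMap.smul_apply]
        conv_rhs => rw [← h1 a, sum_coset_decomp G H (fun g => p g a)]
        refine (Finset.sum_congr rfl fun x _ => ?_)
        have hcst : ∀ h : H, p (Quotient.out x * (h : G)) = p (Quotient.out x) :=
          fun h => hconst _ _ (aux_mk_mul_mem G _ h)
        simp_rw [hcst]
        rw [Finset.sum_const, Finset.card_univ, ← Nat.card_eq_fintype_card,
          ← Nat.cast_smul_eq_nsmul k]
      · -- quotient axiom 2
        intro x a b
        simp only [LinearMap.smul_apply]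
        rw [h2]
        rw [sum_coset_decomp G H (fun l => p (Quotient.out x * l⁻¹) a * p l b)]
        simp_rw [smul_mul_assoc, mul_smul_comm, ← Finset.smul_sum]
        congr 1
        rw [Finset.smul_sum]
        refine Finset.sum_congr rfl fun y _ => ?_
        have hb : ∀ h : H, p (Quotient.out y * (h : G)) = p (Quotient.out y) :=
          fun h => hconst _ _ (aux_mk_mul_mem G _ h)
        have ha : ∀ h : H, p (Quotient.out x * (Quotient.out y * (h : G))⁻¹) =
            p (Quotient.out (x * y⁻¹)) := by
          intro h
          refine hconst _ _ ?_
          simp only [QuotientGroup.mk_mul, QuotientGroup.mk_inv, aux_mk_coe, mul_one,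
            aux_out_mk G H]
        simp_rw [ha, hb, Finset.sum_const, Finset.card_univ, ← Nat.card_eq_fintype_card,
          ← Nat.cast_smul_eq_nsmul k]
      · -- quotient axiom 3
        intro x y a
        simp only [LinearMap.smul_apply, map_smul]
        rw [h3, hs]
        have hcond : (Quotient.out x * (Quotient.out y)⁻¹ ∈ H) ↔ (x = y) := by
          rw [Subgroup.Normal.mem_comm_iff inferInstance, ← QuotientGroup.eq,
            aux_out_mk G H, aux_out_mk G H]
          exact eq_comm
        simp only [hcond]
        by_cases hxy : x = y
        · have hc' : (Fintype.card H : k) ≠ 0 := by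
            rw [← Nat.card_eq_fintype_card]; exact hc
          simp [hxy, smul_mul_assoc, smul_inv_smul₀ hc, smul_inv_smul₀ hc']
        · simp [hxy]
    · -- down ∘ up = id
      funext g
      show ((Nat.card H : k))⁻¹ • ((Nat.card H : k) •
        p (Quotient.out ((g : G ⧸ H)))) = p g
      rw [inv_smul_smul₀ hc]
      exact hconst _ _ (aux_out_mk G H _)
end

section
/- Let k be a field of characteristic ≠ 2 and A an algebra with a partial Z₂-grading, i.e. a partial action of H = (kC₂)* on A. Let A = A₀ ⊕ A₁ ⊕ A_{1/2} be the eigenspace decomposition of the operator a ↦ p_g·a with eigenvalues 0, 1, 1/2. Then: (1) B = A₀ ⊕ A₁ is a subalgebra of A which is Z₂-graded with B_0̄ = A₀ and B_1̄ = A₁; (2) A_{1/2} is a two-sided ideal of A; (3) 1_A = u + v with u ∈ A₀, v ∈ A_{1/2} orthogonal idempotents; (4) uAv = vAu = 0, so A ≅ B × A_{1/2} as algebras. -/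
/-- Structure of partially `ℤ₂`-graded algebras.  A partial `ℤ₂`-grading of
`A` (a partial action of `(kC₂)*`) is given by the operators `Te = p_e·-`, `Tg = p_g·-`.
Decomposing `A = A₀ ⊕ A₁ ⊕ A_{1/2}` into the eigenspaces of `Tg` for `0`, `1`, `1/2`:
(1) `B = A₀ ⊕ A₁` is a `ℤ₂`-graded subalgebra, (2) `A_{1/2}` is an ideal,
(3) `1 = u + v` with `u ∈ A₀`, `v ∈ A_{1/2}` orthogonal idempotents, and
(4) `uAv = vAu = 0` and `u, v` are central, so `A ≅ B × A_{1/2}` as algebras. -/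
theorem partial_Z2_grading_structure
    (k : Type*) [Field k] (hchar : (2 : k) ≠ 0)
    (A : Type*) [Ring A] [Algebra k A]
    (Te Tg : A →ₗ[k] A)
    (hsum : ∀ a : A, Te a + Tg a = a)
    (hmul_e : ∀ a b : A, Te (a * b) = Te a * Te b + Tg a * Tg b)
    (hmul_g : ∀ a b : A, Tg (a * b) = Te a * Tg b + Tg a * Te b)
    (hee : ∀ a : A, Te (Te a) = Te 1 * Te a) (hee' : ∀ a : A, Te (Te a) = Te a * Te 1)
    (heg : ∀ a : A, Te (Tg a) = Tg 1 * Tg a) (heg' : ∀ a : A, Te (Tg a) = Tg a * Tg 1)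
    (hge : ∀ a : A, Tg (Te a) = Tg 1 * Te a) (hge' : ∀ a : A, Tg (Te a) = Te a * Tg 1)
    (hgg : ∀ a : A, Tg (Tg a) = Te 1 * Tg a) (hgg' : ∀ a : A, Tg (Tg a) = Tg a * Te 1) :
    -- eigenspace decomposition `A = A₀ ⊕ A₁ ⊕ A_{1/2}`
    (∀ a : A, ∃! t : A × A × A,
      t.1 ∈ LinearMap.ker Tg ∧
      t.2.1 ∈ LinearMap.ker (Tg - LinearMap.id) ∧
      t.2.2 ∈ LinearMap.ker (Tg - (2 : k)⁻¹ • LinearMap.id) ∧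
      a = t.1 + t.2.1 + t.2.2) ∧
    -- (1) `B = A₀ ⊕ A₁` is a `ℤ₂`-graded subalgebra
    ((∀ a b : A, a ∈ LinearMap.ker Tg → b ∈ LinearMap.ker Tg →
        a * b ∈ LinearMap.ker Tg) ∧
      (∀ a b : A, a ∈ LinearMap.ker Tg → b ∈ LinearMap.ker (Tg - LinearMap.id) →
        a * b ∈ LinearMap.ker (Tg - LinearMap.id)) ∧
      (∀ a b : A, a ∈ LinearMap.ker (Tg - LinearMap.id) → b ∈ LinearMap.ker Tg →
        a * b ∈ LinearMap.ker (Tg - LinearMap.id)) ∧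
      (∀ a b : A, a ∈ LinearMap.ker (Tg - LinearMap.id) →
        b ∈ LinearMap.ker (Tg - LinearMap.id) → a * b ∈ LinearMap.ker Tg)) ∧
    -- (2) `A_{1/2}` is a two-sided ideal
    (∀ (a x : A), a ∈ LinearMap.ker (Tg - (2 : k)⁻¹ • LinearMap.id) →
      x * a ∈ LinearMap.ker (Tg - (2 : k)⁻¹ • LinearMap.id) ∧
      a * x ∈ LinearMap.ker (Tg - (2 : k)⁻¹ • LinearMap.id)) ∧
    -- (3) and (4)
    (∃ u v : A, u ∈ LinearMap.ker Tg ∧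
      v ∈ LinearMap.ker (Tg - (2 : k)⁻¹ • LinearMap.id) ∧
      u + v = 1 ∧ u * u = u ∧ v * v = v ∧ u * v = 0 ∧ v * u = 0 ∧
      (∀ a : A, u * a * v = 0 ∧ v * a * u = 0 ∧ u * a = a * u ∧ v * a = a * v)) := by

  have h2 : (2:k)⁻¹ * 2 = 1 := inv_mul_cancel₀ hchar
  have hTe : ∀ a : A, Te a = a - Tg a := fun a => eq_sub_of_add_eq (hsum a)
  have hhalf : ∀ x : A, (2:k)⁻¹ • ((2:k) • x) = x := fun x => by
    rw [smul_smul, h2, one_smul]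
  have hhalf' : ∀ x : A, (2:k) • ((2:k)⁻¹ • x) = x := fun x => by
    rw [smul_smul, mul_inv_cancel₀ hchar, one_smul]
  have hof : ∀ x y : A, x + x = y → x = (2:k)⁻¹ • y := by
    intro x y h; rw [← h, ← two_smul k x, hhalf]
  have hE : ∀ a : A, Tg 1 * Te a = Tg 1 * Tg a := by
    intro a
    have h := congrArg Tg (hsum a)
    rw [map_add, hge a, hgg a] at h
    have h' : Tg 1 * Te a = Tg a - Te 1 * Tg a := eq_sub_of_add_eq h
    rw [h', hTe 1, sub_mul, one_mul, sub_sub_cancel]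
  have hga : ∀ a : A, Tg 1 * a = Tg 1 * Tg a + Tg 1 * Tg a := by
    intro a
    conv_lhs => rw [← hsum a, mul_add, hE a]
  have hgTg : ∀ a : A, Tg 1 * Tg a = (2:k)⁻¹ • (Tg 1 * a) := fun a => hof _ _ (hga a).symm
  have hgsq : Tg 1 * Tg 1 = (2:k)⁻¹ • Tg 1 := by have := hgTg 1; rwa [mul_one] at this
  have hcomm2 : ∀ a : A, Tg 1 * Tg a = Tg a * Tg 1 := by
    intro a
    have h := (hgg a).symm.trans (hgg' a)
    rw [hTe 1, sub_mul, one_mul, mul_sub, mul_one, sub_right_inj] at h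
    exact h
  have hcomm1 : ∀ a : A, Tg 1 * Te a = Te a * Tg 1 := fun a => (hge a).symm.trans (hge' a)
  have hcent : ∀ a : A, Tg 1 * a = a * Tg 1 := by
    intro a
    rw [← hsum a, mul_add, hcomm1 a, hcomm2 a, ← add_mul]
  have hTgg : ∀ a : A, Tg (Tg 1 * a) = (2:k)⁻¹ • (Tg 1 * a) := by
    intro a
    rw [hmul_g (Tg 1) a, show Te (Tg 1) = Tg 1 * Tg 1 from heg 1,
      show Tg (Tg 1) = Te 1 * Tg 1 from hgg 1, hTe 1, hTe a, hgsq,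
      sub_mul 1 (Tg 1) (Tg 1), one_mul, hgsq]
    simp only [smul_mul_assoc, sub_mul, mul_sub, smul_sub, hgTg a]
    match_scalars <;> field_simp <;> ring
  have hTg2 : ∀ a : A, Tg (Tg a) = Tg a - (2:k)⁻¹ • (Tg 1 * a) := by
    intro a; rw [hgg a, hTe 1, sub_mul, one_mul, hgTg a]
  have hTgTg : Tg (Tg 1) = (2:k)⁻¹ • Tg 1 := by
    have := hTgg 1; rwa [mul_one] at this
  refine ⟨?_, ⟨?_, ?_, ?_, ?_⟩, ?_, ?_⟩
  · -- eigenspace decomposition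
    intro a
    refine ⟨⟨a - Tg a - Tg 1 * a, Tg a - Tg 1 * a, (2:k) • (Tg 1 * a)⟩, ⟨?_, ?_, ?_, ?_⟩, ?_⟩
    · simp only [LinearMap.mem_ker, map_sub, hTg2 a, hTgg a]
      module
    · simp only [LinearMap.mem_ker, LinearMap.sub_apply, LinearMap.id_coe, id_eq, sub_eq_zero,
        map_sub, hTg2 a, hTgg a]
      match_scalars <;> field_simp <;> ring
    · simp only [LinearMap.mem_ker, LinearMap.sub_apply, LinearMap.smul_apply, LinearMap.id_coe,
        id_eq, sub_eq_zero, map_smul, hTgg a]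
      match_scalars <;> field_simp <;> ring
    · match_scalars <;> field_simp <;> ring
    · rintro ⟨x', y', z'⟩ ⟨hx', hy', hz', hsum'⟩
      simp only [LinearMap.mem_ker, LinearMap.sub_apply, LinearMap.smul_apply, LinearMap.id_coe,
        id_eq, sub_eq_zero] at hx' hy' hz'
      have hgz' : Tg 1 * z' = (2:k)⁻¹ • z' := by
        have h' := hTg2 z'
        rw [hz', map_smul, hz'] at h'
        have h'' := congrArg (fun w : A => (2:k) • w) h'
        simp only [smul_sub, hhalf'] at h''
        rw [eq_sub_iff_add_eq, add_comm] at h''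
        have h3 : Tg 1 * z' = z' - (2:k)⁻¹ • z' := eq_sub_of_add_eq h''
        rw [h3]; match_scalars <;> field_simp <;> ring
      have hgx' : Tg 1 * x' = 0 := by
        have := hga x'; rwa [hx', mul_zero, add_zero] at this
      have hgy' : Tg 1 * y' = 0 := by
        have := hga y'; rw [hy'] at this; exact (left_eq_add.mp this)
      have hgaz : Tg 1 * a = (2:k)⁻¹ • z' := by
        rw [hsum', mul_add, mul_add, hgx', hgy', hgz', zero_add, zero_add]
      have hTa : Tg a = y' + (2:k)⁻¹ • z' := by
        rw [hsum', map_add, map_add, hx', hy', hz', zero_add]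
      have e3 : (2:k) • (Tg 1 * a) = z' := by rw [hgaz, hhalf']
      have e2 : Tg a - Tg 1 * a = y' := by rw [hTa, hgaz]; abel
      have e1 : a - Tg a - Tg 1 * a = x' := by
        rw [hTa, hgaz, hsum']; match_scalars <;> field_simp <;> ring
      simp only [Prod.mk.injEq]
      exact ⟨e1.symm, e2.symm, e3.symm⟩
  · -- A0 * A0 ⊆ A0
    intro a b ha hb
    rw [LinearMap.mem_ker] at ha hb ⊢
    rw [hmul_g, ha, hb, mul_zero, zero_mul, add_zero]
  · -- A0 * A1 ⊆ A1
    intro a b ha hb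
    rw [LinearMap.mem_ker] at ha
    simp only [LinearMap.mem_ker, LinearMap.sub_apply, LinearMap.id_coe, id_eq,
      sub_eq_zero] at hb ⊢
    rw [hmul_g, ha, hb, zero_mul, add_zero, hTe a, ha, sub_zero]
  · -- A1 * A0 ⊆ A1
    intro a b ha hb
    rw [LinearMap.mem_ker] at hb
    simp only [LinearMap.mem_ker, LinearMap.sub_apply, LinearMap.id_coe, id_eq,
      sub_eq_zero] at ha ⊢
    rw [hmul_g, hb, mul_zero, zero_add, ha, hTe b, hb, sub_zero]
  · -- A1 * A1 ⊆ A0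
    intro a b ha hb
    simp only [LinearMap.mem_ker, LinearMap.sub_apply, LinearMap.id_coe, id_eq,
      sub_eq_zero] at ha hb
    rw [LinearMap.mem_ker, hmul_g, hTe a, hTe b, ha, hb, sub_self, sub_self, zero_mul, mul_zero,
      add_zero]
  · -- ideal
    intro a x ha
    simp only [LinearMap.mem_ker, LinearMap.sub_apply, LinearMap.smul_apply, LinearMap.id_coe,
      id_eq, sub_eq_zero] at ha ⊢
    constructor
    · rw [hmul_g, ha, hTe a, ha, hTe x]
      simp only [mul_smul_comm, mul_sub, sub_mul, smul_sub]
      match_scalars <;> field_simp <;> ring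
    · rw [hmul_g, ha, hTe a, ha, hTe x]
      simp only [smul_mul_assoc, mul_sub, sub_mul, smul_sub]
      match_scalars <;> field_simp <;> ring
  · -- idempotents
    refine ⟨1 - (2:k) • Tg 1, (2:k) • Tg 1, ?_, ?_, ?_, ?_, ?_, ?_, ?_, ?_⟩
    · rw [LinearMap.mem_ker, map_sub, map_smul, hTgTg, hhalf', sub_self]
    · simp only [LinearMap.mem_ker, LinearMap.sub_apply, LinearMap.smul_apply, LinearMap.id_coe,
        id_eq, sub_eq_zero, map_smul, hTgTg]
      match_scalars <;> field_simp <;> ring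
    · rw [sub_add_cancel]
    · have hvv : ((2:k) • Tg 1) * ((2:k) • Tg 1) = (2:k) • Tg 1 := by
        rw [smul_mul_assoc, mul_smul_comm, hgsq]
        match_scalars <;> field_simp <;> ring
      rw [mul_sub, mul_one, sub_mul, one_mul, hvv, sub_self, sub_zero]
    · rw [smul_mul_assoc, mul_smul_comm, hgsq]
      match_scalars <;> field_simp <;> ring
    · have hvv : ((2:k) • Tg 1) * ((2:k) • Tg 1) = (2:k) • Tg 1 := by
        rw [smul_mul_assoc, mul_smul_comm, hgsq]
        match_scalars <;> field_simp <;> ring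
      rw [sub_mul, one_mul, hvv, sub_self]
    · have hvv : ((2:k) • Tg 1) * ((2:k) • Tg 1) = (2:k) • Tg 1 := by
        rw [smul_mul_assoc, mul_smul_comm, hgsq]
        match_scalars <;> field_simp <;> ring
      rw [mul_sub, mul_one, hvv, sub_self]
    · have hcv : ∀ a : A, ((2:k) • Tg 1) * a = a * ((2:k) • Tg 1) := by
        intro a; rw [smul_mul_assoc, mul_smul_comm, hcent]
      have hcu : ∀ a : A, (1 - (2:k) • Tg 1) * a = a * (1 - (2:k) • Tg 1) := by
        intro a; rw [sub_mul, one_mul, mul_sub, mul_one, hcv]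
      have hvv : ((2:k) • Tg 1) * ((2:k) • Tg 1) = (2:k) • Tg 1 := by
        rw [smul_mul_assoc, mul_smul_comm, hgsq]
        match_scalars <;> field_simp <;> ring
      have huv : (1 - (2:k) • Tg 1) * ((2:k) • Tg 1) = 0 := by
        rw [sub_mul, one_mul, hvv, sub_self]
      have hvu : ((2:k) • Tg 1) * (1 - (2:k) • Tg 1) = 0 := by
        rw [mul_sub, mul_one, hvv, sub_self]
      intro a
      refine ⟨?_, ?_, (hcu a).symm ▸ rfl, ?_⟩
      · rw [hcu, mul_assoc, huv, mul_zero]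
      · rw [hcv, mul_assoc, hvu, mul_zero]
      · exact hcv a
end

section
/- Let k be a field of characteristic ≠ 2, V a k-vector space, and T ∈ End(V). Then the assignment p_g ↦ T, p_e ↦ id_V − T extends to a partial representation of (kC₂)* on V if and only if T(2T − id)(T − id) = 0, i.e. the minimal polynomial of T divides x(2x−1)(x−1). -/
/-- Let `k` be a field with `char k ≠ 2`, `V` a `k`-vector space and
`T ∈ End(V)`.  The assignment `p_g ↦ T`, `p_e ↦ id - T` extends to a partial
representation of `(kC₂)*` on `V` (i.e. the axioms (PR1), (PR2), (PR5) written out on the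
basis `{p_e, p_g}` hold, with `S = id`) if and only if `T(2T - id)(T - id) = 0`, i.e.
the minimal polynomial of `T` divides `x(2x-1)(x-1)`. -/
theorem partialRep_of_dual_C2_iff_cubic
    (k : Type*) [Field k] (hchar : (2 : k) ≠ 0)
    (V : Type*) [AddCommGroup V] [Module k V] (T : V →ₗ[k] V) :
    -- `Te := id - T`, `Tg := T`; the partial representation conditions are:
    (((LinearMap.id - T) ∘ₗ ((LinearMap.id - T) ∘ₗ (LinearMap.id - T) + T ∘ₗ T) =
        (LinearMap.id - T) ∘ₗ (LinearMap.id - T)) ∧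
      (T ∘ₗ ((LinearMap.id - T) ∘ₗ (LinearMap.id - T) + T ∘ₗ T) = T ∘ₗ T) ∧
      ((LinearMap.id - T) ∘ₗ ((LinearMap.id - T) ∘ₗ T + T ∘ₗ (LinearMap.id - T)) =
        (LinearMap.id - T) ∘ₗ T) ∧
      (T ∘ₗ ((LinearMap.id - T) ∘ₗ T + T ∘ₗ (LinearMap.id - T)) = T ∘ₗ (LinearMap.id - T)) ∧
      (((LinearMap.id - T) ∘ₗ (LinearMap.id - T) + T ∘ₗ T) ∘ₗ (LinearMap.id - T) =
        (LinearMap.id - T) ∘ₗ (LinearMap.id - T)) ∧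
      (((LinearMap.id - T) ∘ₗ (LinearMap.id - T) + T ∘ₗ T) ∘ₗ T = T ∘ₗ T) ∧
      (((LinearMap.id - T) ∘ₗ T + T ∘ₗ (LinearMap.id - T)) ∘ₗ (LinearMap.id - T) =
        T ∘ₗ (LinearMap.id - T)) ∧
      (((LinearMap.id - T) ∘ₗ T + T ∘ₗ (LinearMap.id - T)) ∘ₗ T =
        (LinearMap.id - T) ∘ₗ T))
    ↔ T ∘ₗ ((2 : k) • T - LinearMap.id) ∘ₗ (T - LinearMap.id) = 0 := by

  have h2T : (2 : k) • T = T + T := by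
    rw [show (2:k) = 1 + 1 by norm_num, add_smul, one_smul]
  simp only [← Module.End.mul_eq_comp, ← Module.End.one_eq_id, h2T]
  set c : V →ₗ[k] V := T * ((T + T - 1) * (T - 1)) with hc
  constructor
  · rintro ⟨-, h2, -, -, -, -, -, -⟩
    have : c = T * ((1 - T) * (1 - T) + T * T) - T * T := by rw [hc]; noncomm_ring
    rw [this, h2, sub_self]
  · intro h
    refine ⟨?_, ?_, ?_, ?_, ?_, ?_, ?_, ?_⟩ <;> rw [← sub_eq_zero]
    · have : (1 - T) * ((1 - T) * (1 - T) + T * T) - (1 - T) * (1 - T) = -c := by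
        rw [hc]; noncomm_ring
      rw [this, h, neg_zero]
    · have : T * ((1 - T) * (1 - T) + T * T) - T * T = c := by rw [hc]; noncomm_ring
      rw [this, h]
    · have : (1 - T) * ((1 - T) * T + T * (1 - T)) - (1 - T) * T = c := by
        rw [hc]; noncomm_ring
      rw [this, h]
    · have : T * ((1 - T) * T + T * (1 - T)) - T * (1 - T) = -c := by
        rw [hc]; noncomm_ring
      rw [this, h, neg_zero]
    · have : ((1 - T) * (1 - T) + T * T) * (1 - T) - (1 - T) * (1 - T) = -c := by
        rw [hc]; noncomm_ring
      rw [this, h, neg_zero]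
    · have : ((1 - T) * (1 - T) + T * T) * T - T * T = c := by rw [hc]; noncomm_ring
      rw [this, h]
    · have : ((1 - T) * T + T * (1 - T)) * (1 - T) - T * (1 - T) = c := by
        rw [hc]; noncomm_ring
      rw [this, h]
    · have : ((1 - T) * T + T * (1 - T)) * T - (1 - T) * T = -c := by
        rw [hc]; noncomm_ring
      rw [this, h, neg_zero]
end
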